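/- Let α, β > 0, set ω = √2 (αβ)^{1/4}, T = 2π/ω, and let γ(t) = (β^{1/4} cos ωt, −α^{1/4} sin ωt), a clockwise parametrization of the ellipse with semiaxes β^{1/4} and α^{1/4}. Then the free-period action with κ = 0 satisfies ∫₀ᵀ L(γ(t), γ'(t)) dt = √2 π (αβ)^{1/4} (√α + √β − √2). In particular this action is negative if and only if √α + √β < √2. -/

import Mathlib

open Real

/-- Lagrangian of the planar electromagnetic toy model:
`L((x,y),(v₁,v₂)) = ½(v₁²+v₂²) − y v₁ + x v₂ + αx² + βy²`. -/
noncomputable def toyLag (α β : ℝ) (q v : ℝ × ℝ) : ℝ :=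
  (1/2)*(v.1^2 + v.2^2) - q.2*v.1 + q.1*v.2 + α*q.1^2 + β*q.2^2

theorem stmt_6 (α β : ℝ) (hα : 0 < α) (hβ : 0 < β)
    (ω T : ℝ) (hω : ω = Real.sqrt 2 * (α*β) ^ ((1:ℝ)/4)) (hT : T = 2*π/ω)
    (γ : ℝ → ℝ × ℝ)
    (hγ : γ = fun t => (β ^ ((1:ℝ)/4) * Real.cos (ω*t), -(α ^ ((1:ℝ)/4)) * Real.sin (ω*t))) :
    (∫ t in (0:ℝ)..T, toyLag α β (γ t) (deriv γ t)) =
      Real.sqrt 2 * π * (α*β) ^ ((1:ℝ)/4) *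
        (Real.sqrt α + Real.sqrt β - Real.sqrt 2) ∧
    ((∫ t in (0:ℝ)..T, toyLag α β (γ t) (deriv γ t)) < 0 ↔
      Real.sqrt α + Real.sqrt β < Real.sqrt 2) := by
  have hαβ : (0:ℝ) < α*β := mul_pos hα hβ
  set a := β ^ ((1:ℝ)/4) with ha
  set b := α ^ ((1:ℝ)/4) with hb
  have ha2 : a^2 = Real.sqrt β := by
    rw [ha, ← Real.rpow_natCast (β ^ ((1:ℝ)/4)) 2, ← Real.rpow_mul hβ.le,
      Real.sqrt_eq_rpow]
    norm_num
  have hb2 : b^2 = Real.sqrt α := by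
    rw [hb, ← Real.rpow_natCast (α ^ ((1:ℝ)/4)) 2, ← Real.rpow_mul hα.le,
      Real.sqrt_eq_rpow]
    norm_num
  have hab : (α*β) ^ ((1:ℝ)/4) = b * a := by
    rw [Real.mul_rpow hα.le hβ.le]
  have hapos : 0 < a := Real.rpow_pos_of_pos hβ _
  have hbpos : 0 < b := Real.rpow_pos_of_pos hα _
  have hs2 : Real.sqrt 2 ^ 2 = 2 := Real.sq_sqrt (by norm_num)
  have hωeq : ω = Real.sqrt 2 * (b * a) := by rw [hω, hab]
  have hωpos : 0 < ω := by rw [hωeq]; positivity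
  have hα4 : α = b^4 := by rw [← Real.sq_sqrt hα.le, ← hb2]; ring
  have hβ4 : β = a^4 := by rw [← Real.sq_sqrt hβ.le, ← ha2]; ring
  -- derivative of γ
  have hderiv : ∀ t : ℝ, deriv γ t = (-(a*ω) * Real.sin (ω*t), -(b*ω) * Real.cos (ω*t)) := by
    intro t
    have h1 : HasDerivAt (fun t : ℝ => ω*t) ω t := by
      simpa using (hasDerivAt_id t).const_mul ω
    have hc : HasDerivAt (fun t : ℝ => a * Real.cos (ω*t)) (a * (-Real.sin (ω*t) * ω)) t :=
      ((Real.hasDerivAt_cos (ω*t)).comp t h1).const_mul a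
    have hsn : HasDerivAt (fun t : ℝ => -b * Real.sin (ω*t)) (-b * (Real.cos (ω*t) * ω)) t :=
      ((Real.hasDerivAt_sin (ω*t)).comp t h1).const_mul (-b)
    have hp : HasDerivAt γ (-(a*ω) * Real.sin (ω*t), -(b*ω) * Real.cos (ω*t)) t := by
      rw [hγ]
      convert hc.prodMk hsn using 2 <;> ring
    exact hp.deriv
  -- pointwise value of the Lagrangian along γ
  have hint : ∀ t : ℝ,
      toyLag α β (γ t) (deriv γ t)
        = Real.sqrt α * Real.sqrt β * (Real.sqrt α + Real.sqrt β - Real.sqrt 2)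
          + (α * Real.sqrt β - β * Real.sqrt α) * Real.cos (2*ω*t) := by
    intro t
    have hc2 : Real.cos (2*ω*t) = 2 * Real.cos (ω*t)^2 - 1 := by
      rw [mul_assoc, Real.cos_two_mul]
    simp only [hderiv]
    simp only [hγ, toyLag]
    have hsc : Real.sin (ω*t)^2 = 1 - Real.cos (ω*t)^2 := by
      have := Real.sin_sq_add_cos_sq (ω*t); linarith
    rw [hc2]
    set s := Real.sin (ω*t) with hsdef
    set c := Real.cos (ω*t) with hcdef
    rw [← ha2, ← hb2]
    rw [hα4, hβ4, hωeq]
    linear_combination (1/2*(Real.sqrt 2)^2*a^4*b^2 - Real.sqrt 2*b^2*a^2 + a^4*b^2) * hsc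
      + ((a^2*b^2*c^2*(b^2-a^2) + a^4*b^2)/2) * hs2
  set K : ℝ := Real.sqrt α * Real.sqrt β * (Real.sqrt α + Real.sqrt β - Real.sqrt 2) with hK
  set M : ℝ := α * Real.sqrt β - β * Real.sqrt α with hM
  have hTE : ω * T = 2 * π := by rw [hT]; field_simp
  have hI : (∫ t in (0:ℝ)..T, toyLag α β (γ t) (deriv γ t)) = K * T := by
    rw [intervalIntegral.integral_congr (g := fun t => K + M * Real.cos (2*ω*t))
      (fun t _ => hint t)]
    have h1 : IntervalIntegrable (fun _ : ℝ => K) MeasureTheory.volume 0 T :=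
      intervalIntegrable_const
    have h2 : IntervalIntegrable (fun t : ℝ => M * Real.cos (2*ω*t))
        MeasureTheory.volume 0 T := by
      apply Continuous.intervalIntegrable
      fun_prop
    rw [intervalIntegral.integral_add h1 h2, intervalIntegral.integral_const,
      intervalIntegral.integral_const_mul]
    have h2ω : (2*ω) ≠ 0 := by positivity
    rw [intervalIntegral.integral_comp_mul_left Real.cos h2ω]
    have h4π : 2*ω*T = (4:ℤ)*π := by push_cast; linarith [hTE]
    rw [mul_zero, integral_cos, h4π, Real.sin_int_mul_pi, Real.sin_zero]
    simp [smul_eq_mul]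
    ring
  have hEq : (∫ t in (0:ℝ)..T, toyLag α β (γ t) (deriv γ t))
      = Real.sqrt 2 * π * (α*β) ^ ((1:ℝ)/4) *
        (Real.sqrt α + Real.sqrt β - Real.sqrt 2) := by
    rw [hI, hT, hωeq, hab, hK, ← ha2, ← hb2]
    have hne : Real.sqrt 2 * (b*a) ≠ 0 := by positivity
    field_simp
    linear_combination (Real.sqrt 2 - a^2 - b^2) * hs2
  have hC : 0 < Real.sqrt 2 * π * (α*β) ^ ((1:ℝ)/4) := by
    have := Real.pi_pos
    positivity
  refine ⟨hEq, ?_⟩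
  rw [hEq]
  constructor
  · intro h
    by_contra hge
    push_neg at hge
    have : 0 ≤ Real.sqrt α + Real.sqrt β - Real.sqrt 2 := by linarith
    nlinarith
  · intro h
    have hx : Real.sqrt α + Real.sqrt β - Real.sqrt 2 < 0 := by linarith
    exact mul_neg_of_pos_of_neg hC hx
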